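/- The orders ∅(S++R) and ∅R generated by lexicographic revision sequences differ if and only if there exist models I and J with I ≡_{∅R} J (i.e., I ≤_{∅R} J and J ≤_{∅R} I) and ¬(I ≤_{∅S} J). -/
import Mathlib

/-- Propositional formulas over variables of type `α`. -/
inductive PropForm (α : Type) : Type
  | var : α → PropForm α
  | tru : PropForm α
  | fls : PropForm α
  | neg : PropForm α → PropForm α
  | conj : PropForm α → PropForm α → PropForm α
  | disj : PropForm α → PropForm α → PropForm α

namespace PropForm
/-- Evaluation of a formula in a valuation (model). -/
def eval {α : Type} (v : α → Bool) : PropForm α → Bool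
  | var a => v a
  | tru => true
  | fls => false
  | neg f => !(eval v f)
  | conj f g => eval v f && eval v g
  | disj f g => eval v f || eval v g
end PropForm

/-- A model `I` satisfies formula `A`. -/
def Sat {α : Type} (I : α → Bool) (A : PropForm α) : Prop := PropForm.eval I A = true

/-- The order induced by a single formula: `I ≤_A J` iff `I ⊨ A` or `J ⊭ A`. -/
def leA {α : Type} (A : PropForm α) (I J : α → Bool) : Prop := Sat I A ∨ ¬ Sat J A

/-- Auxiliary: the order generated from the flat state by a revision sequence given
in reverse order (most recent revision first). -/
def leSeqRev {α : Type} (I J : α → Bool) : List (PropForm α) → Prop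
  | [] => True
  | A :: S' => leA A I J ∧ (¬ leA A J I ∨ leSeqRev I J S')

/-- `I ≤_{∅S} J`: the order generated from the flat state by the sequence `S` of
lexicographic revisions (given in chronological order, so the last element of `S`
is the most recent revision).  It satisfies `leSeq [] I J ↔ True` and
`leSeq (S' ++ [A]) I J ↔ leA A I J ∧ (¬ leA A J I ∨ leSeq S' I J)`. -/
def leSeq {α : Type} (S : List (PropForm α)) (I J : α → Bool) : Prop :=
  leSeqRev I J S.reverse

/-- `I ≡_{∅S} J`: equivalence of models in the order generated by `S`. -/
def equivSeq {α : Type} (S : List (PropForm α)) (I J : α → Bool) : Prop :=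
  leSeq S I J ∧ leSeq S J I

lemma leSeqRev_append {α : Type} (I J : α → Bool) (L1 L2 : List (PropForm α)) :
    leSeqRev I J (L1 ++ L2) ↔
      leSeqRev I J L1 ∧ (leSeqRev J I L1 → leSeqRev I J L2) := by
  induction L1 with
  | nil => simp [leSeqRev]
  | cons A L1 ih =>
    simp only [List.cons_append, leSeqRev, ih]
    tauto

lemma leSeq_append {α : Type} (S R : List (PropForm α)) (I J : α → Bool) :
    leSeq (S ++ R) I J ↔ leSeq R I J ∧ (leSeq R J I → leSeq S I J) := by
  simp only [leSeq, List.reverse_append, leSeqRev_append]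

/-- STATEMENT 6: the orders `∅(S++R)` and `∅R` differ iff there exist models
`I ≡_{∅R} J` with `¬(I ≤_{∅S} J)`. -/
theorem orders_differ_iff {α : Type} (S R : List (PropForm α)) :
    (¬ ∀ I J : α → Bool, leSeq (S ++ R) I J ↔ leSeq R I J) ↔
      (∃ I J : α → Bool, leSeq R I J ∧ leSeq R J I ∧ ¬ leSeq S I J) := by
  push_neg
  constructor
  · rintro ⟨I, J, h⟩
    rw [leSeq_append] at h
    exact ⟨I, J, by tauto⟩
  · rintro ⟨I, J, h1, h2, h3⟩
    exact ⟨I, J, by rw [leSeq_append]; tauto⟩
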